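/- arXiv:1306.2185 — 3 statements merged into one kernel-verified Lean document; each statement's English description precedes it below -/
import Mathlib

section
/- Let v_1,…,v_n ∈ V be pairwise orthogonal vectors and K ⊆ {1,…,n} a subset with Q(v_i) ≠ 0 for all i ∈ K, so that the basis blade e_K is invertible; write κ = |K|. Let A = Σ_J a_J e_J be an arbitrary real linear combination of basis blades, J ranging over all subsets of {1,…,n} with |J| = ι_J. Then the commutative and anticommutative parts of A with respect to e_K select exactly the basis blades of the corresponding commutation parity: A_{c⁰(e_K)} = Σ_{J : ι_J·κ − |J∩K| even} a_J e_J and A_{c¹(e_K)} = Σ_{J : ι_J·κ − |J∩K| odd} a_J e_J. -/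
noncomputable section
open CliffordAlgebra

variable {V : Type*} [AddCommGroup V] [Module ℝ V] (Q : QuadraticForm ℝ V)

/-- The basis blade `e_J`: the product `∏_{i ∈ J} ι(v i)` with factors taken in
increasing order of the index, `e_∅ = 1`. -/
def basisBlade {n : ℕ} (v : Fin n → V) (J : Finset (Fin n)) : CliffordAlgebra Q :=
  ((J.sort (· ≤ ·)).map (fun i => ι Q (v i))).prod

/-- The commutative (`s = 0`) and anticommutative (`s = 1`) part of `A` with respect to an
invertible element `B`: `A_{c^s(B)} = ½(A + (−1)^s B⁻¹AB)`. -/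
def cPart {𝔸 : Type*} [Ring 𝔸] [Algebra ℝ 𝔸] (B : 𝔸) (s : Fin 2) (A : 𝔸) : 𝔸 :=
  (2 : ℝ)⁻¹ • (A + (-1 : 𝔸) ^ (s : ℕ) * (Ring.inverse B * A * B))

namespace CPartAux
variable {n : ℕ} (v : Fin n → V)

def lblade (l : List (Fin n)) : CliffordAlgebra Q := (l.map fun i => ι Q (v i)).prod

@[simp] lemma lblade_nil : lblade Q v [] = 1 := rfl
@[simp] lemma lblade_cons (i : Fin n) (l : List (Fin n)) :
    lblade Q v (i :: l) = ι Q (v i) * lblade Q v l := by simp [lblade]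

lemma basisBlade_eq (J : Finset (Fin n)) :
    basisBlade Q v J = lblade Q v (J.sort (· ≤ ·)) := rfl

lemma anticomm (hv : ∀ i j : Fin n, i ≠ j → QuadraticMap.polar Q (v i) (v j) = 0)
    {i j : Fin n} (h : i ≠ j) :
    ι Q (v i) * ι Q (v j) = -(ι Q (v j) * ι Q (v i))  := by
  have h2 := ι_mul_ι_add_swap (Q := Q) (v i) (v j)
  rw [hv i j h] at h2
  simp only [map_zero] at h2
  exact eq_neg_of_add_eq_zero_left h2

lemma lblade_mul_ι (hv : ∀ i j : Fin n, i ≠ j → QuadraticMap.polar Q (v i) (v j) = 0)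
    (l : List (Fin n)) (i : Fin n) :
    lblade Q v l * ι Q (v i) =
      ((-1 : ℝ) ^ (l.countP (fun j => j ≠ i))) • (ι Q (v i) * lblade Q v l) := by
  induction l with
  | nil => simp
  | cons j l ih =>
    rw [lblade_cons, mul_assoc, ih, mul_smul_comm]
    by_cases h : j = i
    · subst h
      rw [List.countP_cons_of_neg (by simp)]
    · rw [List.countP_cons_of_pos (by simp [h]), pow_succ,
        ← mul_assoc (ι Q (v j)), anticomm Q v hv h]
      simp only [neg_mul, mul_neg, mul_assoc, smul_neg, mul_neg_one, neg_smul, neg_neg,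
        mul_one]

lemma lblade_mul_lblade (hv : ∀ i j : Fin n, i ≠ j → QuadraticMap.polar Q (v i) (v j) = 0)
    (l₁ l₂ : List (Fin n)) :
    lblade Q v l₁ * lblade Q v l₂ =
      ((-1 : ℝ) ^ ((l₂.map (fun i => l₁.countP (fun j => j ≠ i))).sum)) •
        (lblade Q v l₂ * lblade Q v l₁) := by
  induction l₂ with
  | nil => simp
  | cons i l₂ ih =>
    rw [lblade_cons, ← mul_assoc, lblade_mul_ι Q v hv, smul_mul_assoc,
      mul_assoc, ih, mul_smul_comm, smul_smul, List.map_cons, List.sum_cons, pow_add,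
      mul_assoc]

lemma countP_ne (l : List (Fin n)) (i : Fin n) :
    l.countP (fun j => j ≠ i) + l.count i = l.length := by
  induction l with
  | nil => simp
  | cons j l ih =>
    by_cases h : j = i <;>
      simp [List.countP_cons, List.count_cons, h, ← ih] <;> omega

lemma sum_sort (K : Finset (Fin n)) (f : Fin n → ℕ) :
    ((K.sort (· ≤ ·)).map f).sum = ∑ i ∈ K, f i := by
  rw [Finset.sum]
  conv_rhs => rw [← Finset.sort_eq (s := K) (r := (· ≤ ·))]
  rw [Multiset.map_coe, Multiset.sum_coe]

lemma count_lemma (J K : Finset (Fin n)) :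
    ((K.sort (· ≤ ·)).map (fun i => (J.sort (· ≤ ·)).countP (fun j => j ≠ i))).sum
      + (J ∩ K).card = J.card * K.card := by
  rw [sum_sort]
  have h1 : (J ∩ K).card = ∑ i ∈ K, if i ∈ J then 1 else 0 := by
    rw [Finset.inter_comm, ← Finset.filter_mem_eq_inter, Finset.card_filter]
  have h2 : ∀ i, (J.sort (· ≤ ·)).countP (fun j => j ≠ i) + (if i ∈ J then 1 else 0)
      = J.card := by
    intro i
    have := countP_ne (J.sort (· ≤ ·)) i
    rw [List.Nodup.count (Finset.sort_nodup _ _), Finset.length_sort] at this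
    simpa [Finset.mem_sort] using this
  rw [h1, ← Finset.sum_add_distrib]
  simp_rw [h2]
  rw [Finset.sum_const, smul_eq_mul, mul_comm]

lemma isUnit_lblade (l : List (Fin n)) (hl : ∀ i ∈ l, Q (v i) ≠ 0) :
    IsUnit (lblade Q v l) := by
  induction l with
  | nil => exact isUnit_one
  | cons i l ih =>
    have h0 : Q (v i) ≠ 0 := hl i (List.mem_cons_self)
    have hu : IsUnit (ι Q (v i)) := by
      refine ⟨⟨ι Q (v i), (Q (v i))⁻¹ • ι Q (v i), ?_, ?_⟩, rfl⟩
      · rw [mul_smul_comm, ι_sq_scalar, Algebra.algebraMap_eq_smul_one, smul_smul,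
          inv_mul_cancel₀ h0, one_smul]
      · rw [smul_mul_assoc, ι_sq_scalar, Algebra.algebraMap_eq_smul_one, smul_smul,
          inv_mul_cancel₀ h0, one_smul]
    rw [lblade_cons]
    exact hu.mul (ih fun j hj => hl j (List.mem_cons_of_mem _ hj))

lemma conj (hv : ∀ i j : Fin n, i ≠ j → QuadraticMap.polar Q (v i) (v j) = 0)
    (K : Finset (Fin n)) (hK : ∀ i ∈ K, Q (v i) ≠ 0) (J : Finset (Fin n)) :
    Ring.inverse (basisBlade Q v K) * basisBlade Q v J * basisBlade Q v K =
      ((-1 : ℝ) ^ (J.card * K.card - (J ∩ K).card)) • basisBlade Q v J := by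
  have hu : IsUnit (lblade Q v (K.sort (· ≤ ·))) :=
    isUnit_lblade Q v _ fun i hi => hK i ((Finset.mem_sort _).mp hi)
  have hm : ((K.sort (· ≤ ·)).map
      (fun i => ((J.sort (· ≤ ·)).countP (fun j => j ≠ i)))).sum
      = J.card * K.card - (J ∩ K).card := by
    have := count_lemma J K
    omega
  rw [basisBlade_eq Q v J, basisBlade_eq Q v K, mul_assoc,
    lblade_mul_lblade Q v hv, hm, mul_smul_comm, ← mul_assoc,
    Ring.inverse_mul_cancel _ hu, one_mul]

lemma cPart_sum (hv : ∀ i j : Fin n, i ≠ j → QuadraticMap.polar Q (v i) (v j) = 0)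
    (K : Finset (Fin n)) (hK : ∀ i ∈ K, Q (v i) ≠ 0)
    (a : Finset (Fin n) → ℝ) (s : Fin 2) :
    cPart (basisBlade Q v K) s (∑ J : Finset (Fin n), a J • basisBlade Q v J) =
      ∑ J ∈ Finset.univ.filter
          (fun J : Finset (Fin n) => (J.card * K.card - (J ∩ K).card) % 2 = (s : ℕ)),
        a J • basisBlade Q v J := by
  rw [cPart, Finset.sum_filter]
  rw [Finset.mul_sum, Finset.sum_mul, Finset.mul_sum, ← Finset.sum_add_distrib,
    Finset.smul_sum]
  refine Finset.sum_congr rfl fun J _ => ?_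
  rw [mul_smul_comm, smul_mul_assoc, conj Q v hv K hK J]
  set m := J.card * K.card - (J ∩ K).card with hmdef
  have hsign : ∀ x : CliffordAlgebra Q,
      (-1 : CliffordAlgebra Q) ^ (s : ℕ) * x = ((-1 : ℝ) ^ (s : ℕ)) • x := by
    intro x
    fin_cases s <;> simp
  rw [hsign, smul_smul, smul_smul]
  by_cases hm : m % 2 = (s : ℕ)
  · rw [if_pos hm]
    have hpar : ((-1 : ℝ) ^ (s : ℕ) * a J * (-1) ^ m) = a J := by
      fin_cases s <;> simp at hm ⊢
      · rw [(Nat.even_iff.mpr hm).neg_one_pow]; ring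
      · rw [(Nat.odd_iff.mpr hm).neg_one_pow]; ring
    rw [hpar, ← two_smul ℝ (a J • basisBlade Q v J), smul_smul, smul_smul]
    norm_num
  · rw [if_neg hm]
    have hpar : ((-1 : ℝ) ^ (s : ℕ) * a J * (-1) ^ m) = -(a J) := by
      fin_cases s <;> simp at hm ⊢
      · rw [(Nat.odd_iff.mpr (by omega)).neg_one_pow]; ring
      · rw [(Nat.even_iff.mpr (by omega)).neg_one_pow]; ring
    rw [hpar, neg_smul, add_neg_cancel, smul_zero]

end CPartAux

/-- Decomposition of a multivector `A = Σ_J a_J e_J` into its commutative and anticommutative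
parts with respect to an invertible basis blade `e_K` selects exactly the basis blades of the
corresponding commutation parity. -/
theorem cPart_basisBlade_decomposition {n : ℕ} (v : Fin n → V)
    (hv : ∀ i j : Fin n, i ≠ j → QuadraticMap.polar Q (v i) (v j) = 0)
    (K : Finset (Fin n)) (hK : ∀ i ∈ K, Q (v i) ≠ 0)
    (a : Finset (Fin n) → ℝ)
    (A : CliffordAlgebra Q) (hA : A = ∑ J : Finset (Fin n), a J • basisBlade Q v J) :
    cPart (basisBlade Q v K) 0 A =
      ∑ J ∈ Finset.univ.filter
          (fun J : Finset (Fin n) => (J.card * K.card - (J ∩ K).card) % 2 = 0),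
        a J • basisBlade Q v J ∧
    cPart (basisBlade Q v K) 1 A =
      ∑ J ∈ Finset.univ.filter
          (fun J : Finset (Fin n) => (J.card * K.card - (J ∩ K).card) % 2 = 1),
        a J • basisBlade Q v J := by
  subst hA
  exact ⟨CPartAux.cPart_sum Q v hv K hK a 0, CPartAux.cPart_sum Q v hv K hK a 1⟩
end
end

section
/- Let v_1,…,v_n ∈ V be pairwise orthogonal vectors and K(1),…,K(d) ⊆ {1,…,n} subsets with Q(v_i) ≠ 0 for all i ∈ K(ν), so that each basis blade E_ν = e_{K(ν)} is invertible. Let A = Σ_J a_J e_J be an arbitrary real linear combination of basis blades and let l ∈ {0,1}^d be a multi-index. Then the iterated decomposition equals the simultaneous one: A_{c^l(→(E_1,…,E_d))} = Σ_{J∈S} a_J e_J, where S is the set of those subsets J ⊆ {1,…,n} such that for every ν = 1,…,d one has |J|·|K(ν)| − |J ∩ K(ν)| ≡ l_ν (mod 2); equivalently, the index set of A_{c^l(→(E_1,…,E_d))} is the intersection over ν of the index sets of the single decompositions c^{l_ν}(E_ν). -/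
noncomputable section
open CliffordAlgebra

variable {V : Type*} [AddCommGroup V] [Module ℝ V] (Q : QuadraticForm ℝ V)

/-- The forward iterated decomposition `A_{c^l(→B)}`, applying the first list entry first. -/
def cFwd {𝔸 : Type*} [Ring 𝔸] [Algebra ℝ 𝔸] (L : List (𝔸 × Fin 2)) (A : 𝔸) : 𝔸 :=
  L.foldl (fun acc p => cPart p.1 p.2 acc) A

namespace CFwdAux

lemma neg_one_pow_sub (a b : ℕ) (h : b ≤ a) : (-1 : ℝ) ^ (a - b) = (-1) ^ a * (-1) ^ b := by
  have : (-1 : ℝ) ^ (a - b) * (-1) ^ b = (-1) ^ a := by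
    rw [← pow_add, Nat.sub_add_cancel h]
  rw [← this, mul_assoc, ← pow_add, ← two_mul, pow_mul]
  simp

lemma neg_one_pow_mod_two (a : ℕ) : (-1 : ℝ) ^ a = (-1) ^ (a % 2) := by
  conv_lhs => rw [← Nat.div_add_mod a 2]
  rw [pow_add, pow_mul]
  simp

variable {n : ℕ} (v : Fin n → V)
  (hv : ∀ i j : Fin n, i ≠ j → QuadraticMap.polar Q (v i) (v j) = 0)

include hv in
lemma anticomm {i j : Fin n} (h : i ≠ j) :
    ι Q (v i) * ι Q (v j) = -(ι Q (v j) * ι Q (v i)) := by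
  have := ι_mul_ι_add_swap (Q := Q) (v i) (v j)
  rw [hv i j h] at this
  simp only [map_zero] at this
  exact eq_neg_of_add_eq_zero_left this

include hv in
/-- moving `ι (v i)` through a product indexed by the list `L`. -/
lemma iota_mul_list (i : Fin n) (L : List (Fin n)) :
    ι Q (v i) * (L.map (fun j => ι Q (v j))).prod =
      (((-1 : ℝ) ^ L.length * (-1) ^ (L.count i)) : ℝ) •
        ((L.map (fun j => ι Q (v j))).prod * ι Q (v i)) := by
  induction L with
  | nil => simp
  | cons j L ih =>
    simp only [List.map_cons, List.prod_cons, List.length_cons, List.count_cons, ← mul_assoc]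
    by_cases hji : j = i
    · subst hji
      conv_lhs => rw [mul_assoc, ih, mul_smul_comm, ← mul_assoc]
      congr 1
      simp only [beq_self_eq_true, if_true, pow_succ]
      ring
    · have h1 : ι Q (v i) * ι Q (v j) = -(ι Q (v j) * ι Q (v i)) :=
        anticomm Q v hv (fun h => hji h.symm)
      conv_lhs => rw [h1, neg_mul, mul_assoc, ih, mul_smul_comm, ← neg_smul, ← mul_assoc]
      congr 1
      have : (j == i) = false := by simp [hji]
      rw [this]
      simp only [Bool.false_eq_true, if_false, pow_succ]
      ring

include hv in
lemma list_mul_list (M L : List (Fin n)) :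
    (M.map (fun j => ι Q (v j))).prod * (L.map (fun j => ι Q (v j))).prod =
      (((-1 : ℝ) ^ (M.length * L.length) * (-1) ^ ((M.map (fun j => L.count j)).sum)) : ℝ) •
        ((L.map (fun j => ι Q (v j))).prod * (M.map (fun j => ι Q (v j))).prod) := by
  induction M with
  | nil => simp
  | cons i M ih =>
    simp only [List.map_cons, List.prod_cons, List.sum_cons, List.length_cons]
    conv_lhs => rw [mul_assoc, ih, mul_smul_comm, ← mul_assoc,
      iota_mul_list Q v hv i L, smul_mul_assoc, smul_smul]
    conv_rhs => rw [← mul_assoc]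
    congr 1
    rw [add_mul, one_mul, pow_add, pow_add]
    ring

include hv in
lemma blade_comm (Kf J : Finset (Fin n)) :
    basisBlade Q v Kf * basisBlade Q v J =
      ((-1 : ℝ) ^ (J.card * Kf.card - (J ∩ Kf).card)) •
        (basisBlade Q v J * basisBlade Q v Kf) := by
  rw [basisBlade, basisBlade, list_mul_list Q v hv]
  congr 1
  have hsum : ((Kf.sort (· ≤ ·)).map (fun j => (J.sort (· ≤ ·)).count j)).sum
      = (J ∩ Kf).card := by
    have hperm : List.Perm ((Kf.sort (· ≤ ·)).map (fun j => (J.sort (· ≤ ·)).count j))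
        (Kf.toList.map (fun j => (J.sort (· ≤ ·)).count j)) :=
      (Finset.sort_perm_toList Kf _).map _
    rw [hperm.sum_eq, Finset.sum_map_toList]
    have : ∀ j : Fin n, (J.sort (· ≤ ·)).count j = if j ∈ J then 1 else 0 := by
      intro j
      by_cases hj : j ∈ J
      · rw [if_pos hj]
        exact List.count_eq_one_of_mem (Finset.sort_nodup _ _)
          ((Finset.mem_sort (α := Fin n) (· ≤ ·)).mpr hj)
      · rw [if_neg hj]
        exact List.count_eq_zero_of_not_mem
          (fun hmem => hj ((Finset.mem_sort (α := Fin n) (· ≤ ·)).mp hmem))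
    simp only [this]
    rw [Finset.sum_ite_mem]
    simp [Finset.inter_comm]
  have hle : (J ∩ Kf).card ≤ J.card * Kf.card := by
    rcases Finset.eq_empty_or_nonempty Kf with h | h
    · simp [h]
    · exact le_trans (Finset.card_le_card Finset.inter_subset_left)
        (Nat.le_mul_of_pos_right _ (Finset.card_pos.mpr h))
  rw [neg_one_pow_sub _ _ hle, Finset.length_sort, Finset.length_sort, hsum, mul_comm J.card]

lemma isUnit_iota (i : Fin n) (h : Q (v i) ≠ 0) : IsUnit (ι Q (v i)) := by
  have h1 : ι Q (v i) * ((Q (v i))⁻¹ • ι Q (v i)) = 1 := by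
    rw [mul_smul_comm, ι_sq_scalar, Algebra.algebraMap_eq_smul_one, smul_smul,
      inv_mul_cancel₀ h, one_smul]
  have h2 : ((Q (v i))⁻¹ • ι Q (v i)) * ι Q (v i) = 1 := by
    rw [smul_mul_assoc, ι_sq_scalar, Algebra.algebraMap_eq_smul_one, smul_smul,
      inv_mul_cancel₀ h, one_smul]
  exact ⟨⟨_, _, h1, h2⟩, rfl⟩

lemma isUnit_blade (Kf : Finset (Fin n)) (h : ∀ i ∈ Kf, Q (v i) ≠ 0) :
    IsUnit (basisBlade Q v Kf) := by
  apply List.prod_isUnit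
  intro m hm
  simp only [List.mem_map] at hm
  obtain ⟨i, hi, rfl⟩ := hm
  exact isUnit_iota Q v i (h i ((Finset.mem_sort _).mp hi))

include hv in
lemma cPart_blade (Kf J : Finset (Fin n)) (h : ∀ i ∈ Kf, Q (v i) ≠ 0) (s : Fin 2) :
    cPart (basisBlade Q v Kf) s (basisBlade Q v J) =
      if (J.card * Kf.card - (J ∩ Kf).card) % 2 = (s : ℕ) then basisBlade Q v J else 0 := by
  have hu := isUnit_blade Q v Kf h
  set m := J.card * Kf.card - (J ∩ Kf).card with hmdef
  have h2 : basisBlade Q v J * basisBlade Q v Kf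
      = ((-1 : ℝ) ^ m) • (basisBlade Q v Kf * basisBlade Q v J) := by
    rw [blade_comm Q v hv Kf J, smul_smul, ← pow_add, ← two_mul, pow_mul]
    norm_num
  have hconj : Ring.inverse (basisBlade Q v Kf) * basisBlade Q v J * basisBlade Q v Kf
      = ((-1 : ℝ) ^ m) • basisBlade Q v J := by
    rw [mul_assoc, h2, mul_smul_comm, ← mul_assoc, Ring.inverse_mul_cancel _ hu, one_mul]
  rw [cPart, hconj, neg_one_pow_mod_two]
  rcases Nat.mod_two_eq_zero_or_one m with hm | hm <;> fin_cases s <;>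
    simp only [hm, Fin.isValue, Fin.val_zero, Fin.val_one, pow_zero, pow_one, one_smul,
      one_mul, neg_one_mul, neg_smul, neg_neg, if_true, if_false] <;>
    first
      | (rw [← two_smul ℝ, smul_smul]; norm_num)
      | simp

lemma cPart_sum {𝔸 : Type*} [Ring 𝔸] [Algebra ℝ 𝔸] (B : 𝔸) (s : Fin 2) {κ : Type*}
    (S : Finset κ) (f : κ → 𝔸) :
    cPart B s (∑ x ∈ S, f x) = ∑ x ∈ S, cPart B s (f x) := by
  simp [cPart, Finset.mul_sum, Finset.sum_mul, ← Finset.sum_add_distrib, Finset.smul_sum]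

lemma cPart_smul {𝔸 : Type*} [Ring 𝔸] [Algebra ℝ 𝔸] (B : 𝔸) (s : Fin 2) (r : ℝ) (A : 𝔸) :
    cPart B s (r • A) = r • cPart B s A := by
  simp [cPart, mul_smul_comm, smul_mul_assoc, smul_add, smul_smul, mul_comm]

include hv in
lemma cFwd_list : ∀ (L : List (Finset (Fin n) × Fin 2)),
    (∀ p ∈ L, ∀ i ∈ p.1, Q (v i) ≠ 0) →
    ∀ (S : Finset (Finset (Fin n))) (a : Finset (Fin n) → ℝ),
    cFwd (L.map (fun p => (basisBlade Q v p.1, p.2))) (∑ J ∈ S, a J • basisBlade Q v J) =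
    ∑ J ∈ S.filter
        (fun J => ∀ p ∈ L, (J.card * p.1.card - (J ∩ p.1).card) % 2 = (p.2 : ℕ)),
      a J • basisBlade Q v J := by
  intro L
  induction L with
  | nil =>
    intro _ S a
    simp [cFwd]
  | cons p L ih =>
    intro hQ S a
    have hp : ∀ i ∈ p.1, Q (v i) ≠ 0 := hQ p List.mem_cons_self
    have hL : ∀ q ∈ L, ∀ i ∈ q.1, Q (v i) ≠ 0 :=
      fun q hq => hQ q (List.mem_cons_of_mem _ hq)
    rw [List.map_cons,
      show cFwd ((basisBlade Q v p.1, p.2) :: L.map (fun p => (basisBlade Q v p.1, p.2)))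
          (∑ J ∈ S, a J • basisBlade Q v J)
        = cFwd (L.map (fun p => (basisBlade Q v p.1, p.2)))
          (cPart (basisBlade Q v p.1) p.2 (∑ J ∈ S, a J • basisBlade Q v J)) from rfl,
      cPart_sum]
    have hterm : ∀ J ∈ S, cPart (basisBlade Q v p.1) p.2 (a J • basisBlade Q v J)
        = if (J.card * p.1.card - (J ∩ p.1).card) % 2 = (p.2 : ℕ)
            then a J • basisBlade Q v J else 0 := by
      intro J _
      rw [cPart_smul, cPart_blade Q v hv p.1 J hp]
      split <;> simp
    rw [Finset.sum_congr rfl hterm, ← Finset.sum_filter, ih hL, Finset.filter_filter]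
    apply Finset.sum_congr _ (fun _ _ => rfl)
    apply Finset.filter_congr
    intro J _
    simp [List.forall_mem_cons]

end CFwdAux

/-- The iterated decomposition of `A = Σ_J a_J e_J` with respect to the invertible basis blades
`e_{K(1)},…,e_{K(d)}` equals the simultaneous decomposition: it selects exactly those basis
blades whose commutation parity with every `e_{K(ν)}` matches `l_ν`. -/
theorem cFwd_basisBlade_decomposition {n d : ℕ} (v : Fin n → V)
    (hv : ∀ i j : Fin n, i ≠ j → QuadraticMap.polar Q (v i) (v j) = 0)
    (K : Fin d → Finset (Fin n)) (hK : ∀ ν, ∀ i ∈ K ν, Q (v i) ≠ 0)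
    (a : Finset (Fin n) → ℝ)
    (A : CliffordAlgebra Q) (hA : A = ∑ J : Finset (Fin n), a J • basisBlade Q v J)
    (l : Fin d → Fin 2) :
    cFwd (List.ofFn (fun ν => (basisBlade Q v (K ν), l ν))) A =
      ∑ J ∈ Finset.univ.filter
          (fun J : Finset (Fin n) =>
            ∀ ν : Fin d, (J.card * (K ν).card - (J ∩ K ν).card) % 2 = (l ν : ℕ)),
        a J • basisBlade Q v J := by
  subst hA
  have h := CFwdAux.cFwd_list Q v hv (List.ofFn fun ν => (K ν, l ν))
    (by
      intro p hp
      rw [List.mem_ofFn] at hp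
      obtain ⟨ν, rfl⟩ := hp
      exact hK ν)
    Finset.univ a
  rw [List.map_ofFn] at h
  simp only [Function.comp_def] at h
  rw [h]
  apply Finset.sum_congr _ (fun _ _ => rfl)
  apply Finset.filter_congr
  intro J _
  simp [List.forall_mem_ofFn_iff]
end
end

section
/- Assume that for every u ∈ ℝ^m and every l the element i_l(u) lies in the center of 𝔸, and that each ρ_l(x,u) is linear in x. Let C, B : ℝ^m → 𝔸 be Bochner integrable. Then the geometric Fourier transform turns convolution into the product of the transforms: for every u ∈ ℝ^m, F_{F_1,F_2}(C⋆B)(u) = F_{F_1,F_2}(C)(u) · F_{F_1,F_2}(B)(u). -/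
noncomputable section
open MeasureTheory

variable {𝔸 : Type*} [NormedRing 𝔸] [NormedAlgebra ℝ 𝔸] [CompleteSpace 𝔸]

/-- The ordered product `g 0 * g 1 * ⋯ * g (d−1)`, factors in increasing order of the index. -/
def oprod {d : ℕ} (g : Fin d → 𝔸) : 𝔸 :=
  (List.ofFn g).prod

lemma oprod_succ {d : ℕ} (g : Fin (d + 1) → 𝔸) :
    oprod g = g 0 * oprod (fun l => g l.succ) := by
  simp [oprod, List.ofFn_succ]

lemma commute_oprod {d : ℕ} (b : 𝔸) (g : Fin d → 𝔸) (h : ∀ l, Commute b (g l)) :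
    Commute b (oprod g) := by
  induction d with
  | zero => simpa [oprod] using Commute.one_right b
  | succ n ih =>
    rw [oprod_succ]
    exact (h 0).mul_right (ih _ fun l => h l.succ)

lemma oprod_mul_of_central {d : ℕ} (a b : Fin d → 𝔸) (hb : ∀ l c, Commute c (b l)) :
    oprod (fun l => a l * b l) = oprod a * oprod b := by
  induction d with
  | zero => simp [oprod]
  | succ n ih =>
    rw [oprod_succ (fun l => a l * b l), oprod_succ a, oprod_succ b]
    have ihs := ih (fun l : Fin n => a l.succ) (fun l : Fin n => b l.succ)
      (fun l c => hb l.succ c)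
    rw [ihs]
    have hcomm := hb 0 (oprod (fun l : Fin n => a l.succ))
    calc a 0 * b 0 * (oprod (fun l : Fin n => a l.succ) * oprod (fun l : Fin n => b l.succ))
        = a 0 * (b 0 * oprod (fun l : Fin n => a l.succ)) * oprod (fun l : Fin n => b l.succ) := by
          simp only [mul_assoc]
      _ = a 0 * (oprod (fun l : Fin n => a l.succ) * b 0) * oprod (fun l : Fin n => b l.succ) := by
          rw [← hcomm.eq]
      _ = a 0 * oprod (fun l : Fin n => a l.succ) * (b 0 * oprod (fun l : Fin n => b l.succ)) := by
          simp only [mul_assoc]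

lemma norm_oprod_le {d : ℕ} (g : Fin d → 𝔸) (c : Fin d → ℝ) (h : ∀ l, ‖g l‖ ≤ c l) :
    ‖oprod g‖ ≤ ‖(1 : 𝔸)‖ * ∏ l, c l := by
  induction d with
  | zero => simp [oprod]
  | succ n ih =>
    rw [oprod_succ, Fin.prod_univ_succ]
    have ihs := ih (fun l : Fin n => g l.succ) (fun l : Fin n => c l.succ)
      (fun l : Fin n => h l.succ)
    calc ‖g 0 * oprod (fun l : Fin n => g l.succ)‖
        ≤ ‖g 0‖ * ‖oprod (fun l : Fin n => g l.succ)‖ := norm_mul_le _ _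
      _ ≤ c 0 * (‖(1 : 𝔸)‖ * ∏ l : Fin n, c l.succ) := by
          exact mul_le_mul (h 0) ihs (norm_nonneg _) ((norm_nonneg _).trans (h 0))
      _ = ‖(1 : 𝔸)‖ * (c 0 * ∏ l : Fin n, c l.succ) := by ring

lemma oprod_continuous {X : Type*} [TopologicalSpace X] {d : ℕ} (F : Fin d → X → 𝔸)
    (h : ∀ l, Continuous (F l)) : Continuous fun x => oprod (fun l => F l x) := by
  induction d with
  | zero => simpa [oprod] using continuous_const
  | succ n ih =>
    have := (h 0).mul (ih (fun l => F l.succ) (fun l => h l.succ))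
    simp only [oprod_succ]
    exact this

/-- Norm bound on the exponential of a real multiple of a square root of `-1`. -/
lemma norm_exp_smul_le (i : 𝔸) (hi : i ^ 2 = -1) (t : ℝ) :
    ‖NormedSpace.exp (t • i)‖ ≤ ‖(1 : 𝔸)‖ + ‖i‖ := by
  have hii : i * i = -1 := by rw [← sq]; exact hi
  set φ : ℂ →ₐ[ℝ] 𝔸 := Complex.liftAux i hii with hφ
  have hcont : Continuous φ := φ.toLinearMap.continuous_of_finiteDimensional
  have hmap : φ (NormedSpace.exp (t • Complex.I)) = NormedSpace.exp (t • i) := by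
    letI : Algebra ℚ 𝔸 := Algebra.compHom 𝔸 (algebraMap ℚ ℝ)
    rw [NormedSpace.map_exp φ hcont, _root_.map_smul, hφ, Complex.liftAux_apply_I]
  set z : ℂ := NormedSpace.exp (t • Complex.I) with hz
  have hznorm : ‖z‖ = 1 := by
    have h1 : z = Complex.exp ((t : ℂ) * Complex.I) := by
      rw [hz, ← Complex.exp_eq_exp_ℂ,
        Complex.real_smul]
    rw [h1]
    exact Complex.norm_exp_ofReal_mul_I t
  rw [← hmap]
  have hφz : φ z = z.re • (1 : 𝔸) + z.im • i := by
    rw [hφ, Complex.liftAux_apply, Algebra.algebraMap_eq_smul_one]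
  rw [hφz]
  have hre : |z.re| ≤ 1 := hznorm ▸ Complex.abs_re_le_norm z
  have him : |z.im| ≤ 1 := hznorm ▸ Complex.abs_im_le_norm z
  calc ‖z.re • (1 : 𝔸) + z.im • i‖ ≤ ‖z.re • (1 : 𝔸)‖ + ‖z.im • i‖ := norm_add_le _ _
    _ = |z.re| * ‖(1 : 𝔸)‖ + |z.im| * ‖i‖ := by
        rw [norm_smul, norm_smul, Real.norm_eq_abs, Real.norm_eq_abs]
    _ ≤ ‖(1 : 𝔸)‖ + ‖i‖ := by
        have h1 := mul_le_mul_of_nonneg_right hre (norm_nonneg (1 : 𝔸))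
        have h2 := mul_le_mul_of_nonneg_right him (norm_nonneg i)
        linarith

/-- The geometric Fourier transform with separable linear blade functions
`f¹_l(x,u) = ρ1_l(x,u)·i1_l(u)` (left kernel) and `f²_l(x,u) = ρ2_l(x,u)·i2_l(u)`
(right kernel):
`F(A)(u) = ∫ (∏_l exp(−f¹_l(x,u))) · A(x) · (∏_l exp(−f²_l(x,u))) dx`. -/
def gft {m μ ν' : ℕ}
    (ρ1 : Fin μ → (Fin m → ℝ) → (Fin m → ℝ) → ℝ) (i1 : Fin μ → (Fin m → ℝ) → 𝔸)
    (ρ2 : Fin ν' → (Fin m → ℝ) → (Fin m → ℝ) → ℝ) (i2 : Fin ν' → (Fin m → ℝ) → 𝔸)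
    (A : (Fin m → ℝ) → 𝔸) (u : Fin m → ℝ) : 𝔸 :=
  ∫ x : Fin m → ℝ,
    oprod (fun l => NormedSpace.exp (-(ρ1 l x u • i1 l u))) * A x *
      oprod (fun l => NormedSpace.exp (-(ρ2 l x u • i2 l u)))

open scoped Convolution

/-- If all the directions `i_l(u)` are central, the geometric Fourier transform turns
convolution into the product of the transforms. -/
theorem gft_convolution_central {m μ ν' : ℕ}
    (ρ1 : Fin μ → (Fin m → ℝ) → (Fin m → ℝ) → ℝ) (i1 : Fin μ → (Fin m → ℝ) → 𝔸)
    (ρ2 : Fin ν' → (Fin m → ℝ) → (Fin m → ℝ) → ℝ) (i2 : Fin ν' → (Fin m → ℝ) → 𝔸)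
    (hi1 : ∀ l u, i1 l u ^ 2 = -1) (hi2 : ∀ l u, i2 l u ^ 2 = -1)
    (hlin1 : ∀ l u, IsLinearMap ℝ (fun x => ρ1 l x u))
    (hlin2 : ∀ l u, IsLinearMap ℝ (fun x => ρ2 l x u))
    (hc1 : ∀ l u, i1 l u ∈ Set.center 𝔸) (hc2 : ∀ l u, i2 l u ∈ Set.center 𝔸)
    (C B : (Fin m → ℝ) → 𝔸) (hC : Integrable C) (hB : Integrable B)
    (u : Fin m → ℝ) :
    gft ρ1 i1 ρ2 i2 (fun x => ∫ y : Fin m → ℝ, C y * B (x - y)) u =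
      gft ρ1 i1 ρ2 i2 C u * gft ρ1 i1 ρ2 i2 B u := by
  classical
  let +nondep : NormedAlgebra ℚ 𝔸 := .restrictScalars ℚ ℝ 𝔸
  -- the two kernel factors and the total kernel
  set P1 : (Fin m → ℝ) → 𝔸 :=
    fun x => oprod (fun l => NormedSpace.exp (-(ρ1 l x u • i1 l u))) with hP1
  set P2 : (Fin m → ℝ) → 𝔸 :=
    fun x => oprod (fun l => NormedSpace.exp (-(ρ2 l x u • i2 l u))) with hP2
  set K : (Fin m → ℝ) → 𝔸 := fun x => P1 x * P2 x with hK
  -- the directions commute with everything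
  have hcom1 : ∀ l (c : 𝔸), Commute c (i1 l u) :=
    fun l c => ((Set.mem_center_iff.mp (hc1 l u)).comm c).symm
  have hcom2 : ∀ l (c : 𝔸), Commute c (i2 l u) :=
    fun l c => ((Set.mem_center_iff.mp (hc2 l u)).comm c).symm
  -- each exponential factor is central
  have hfc1 : ∀ l (x : Fin m → ℝ) (c : 𝔸),
      Commute c (NormedSpace.exp (-(ρ1 l x u • i1 l u))) :=
    fun l x c => Commute.exp_right (((hcom1 l c).smul_right _).neg_right)
  have hfc2 : ∀ l (x : Fin m → ℝ) (c : 𝔸),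
      Commute c (NormedSpace.exp (-(ρ2 l x u • i2 l u))) :=
    fun l x c => Commute.exp_right (((hcom2 l c).smul_right _).neg_right)
  -- the kernel factors are central
  have hP1c : ∀ (x : Fin m → ℝ) (c : 𝔸), Commute c (P1 x) :=
    fun x c => commute_oprod c _ fun l => hfc1 l x c
  have hP2c : ∀ (x : Fin m → ℝ) (c : 𝔸), Commute c (P2 x) :=
    fun x c => commute_oprod c _ fun l => hfc2 l x c
  have hKc : ∀ (x : Fin m → ℝ) (c : 𝔸), Commute c (K x) :=
    fun x c => (hP1c x c).mul_right (hP2c x c)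
  -- multiplicativity of the kernel
  have hP1add : ∀ a b : Fin m → ℝ, P1 (a + b) = P1 a * P1 b := by
    intro a b
    have : (fun l => NormedSpace.exp (-(ρ1 l (a + b) u • i1 l u))) = fun l =>
        NormedSpace.exp (-(ρ1 l a u • i1 l u)) * NormedSpace.exp (-(ρ1 l b u • i1 l u)) := by
      funext l
      have hadd : ρ1 l (a + b) u = ρ1 l a u + ρ1 l b u := (hlin1 l u).map_add a b
      have hcomm : Commute (-(ρ1 l a u • i1 l u)) (-(ρ1 l b u • i1 l u)) :=
        (((Commute.refl (i1 l u)).smul_left _).smul_right _).neg_left.neg_right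
      rw [← NormedSpace.exp_add_of_commute hcomm]
      congr 1
      rw [hadd, add_smul, neg_add]
    rw [hP1]
    simp only
    rw [this, oprod_mul_of_central _ _ (fun l c => hfc1 l b c)]
  have hP2add : ∀ a b : Fin m → ℝ, P2 (a + b) = P2 a * P2 b := by
    intro a b
    have : (fun l => NormedSpace.exp (-(ρ2 l (a + b) u • i2 l u))) = fun l =>
        NormedSpace.exp (-(ρ2 l a u • i2 l u)) * NormedSpace.exp (-(ρ2 l b u • i2 l u)) := by
      funext l
      have hadd : ρ2 l (a + b) u = ρ2 l a u + ρ2 l b u := (hlin2 l u).map_add a b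
      have hcomm : Commute (-(ρ2 l a u • i2 l u)) (-(ρ2 l b u • i2 l u)) :=
        (((Commute.refl (i2 l u)).smul_left _).smul_right _).neg_left.neg_right
      rw [← NormedSpace.exp_add_of_commute hcomm]
      congr 1
      rw [hadd, add_smul, neg_add]
    rw [hP2]
    simp only
    rw [this, oprod_mul_of_central _ _ (fun l c => hfc2 l b c)]
  have hKadd : ∀ a b : Fin m → ℝ, K (a + b) = K a * K b := by
    intro a b
    rw [hK]
    simp only
    rw [hP1add, hP2add]
    calc P1 a * P1 b * (P2 a * P2 b)
        = P1 a * (P1 b * P2 a) * P2 b := by simp only [mul_assoc]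
      _ = P1 a * (P2 a * P1 b) * P2 b := by rw [(hP1c b (P2 a)).eq]
      _ = P1 a * P2 a * (P1 b * P2 b) := by simp only [mul_assoc]
  -- norm bound for the kernel
  set M : ℝ := (‖(1 : 𝔸)‖ * ∏ l, (‖(1 : 𝔸)‖ + ‖i1 l u‖)) *
    (‖(1 : 𝔸)‖ * ∏ l, (‖(1 : 𝔸)‖ + ‖i2 l u‖)) with hM
  have hP1bdd : ∀ x, ‖P1 x‖ ≤ ‖(1 : 𝔸)‖ * ∏ l, (‖(1 : 𝔸)‖ + ‖i1 l u‖) := by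
    intro x
    refine norm_oprod_le _ _ fun l => ?_
    rw [← neg_smul]
    exact norm_exp_smul_le (i1 l u) (hi1 l u) _
  have hP2bdd : ∀ x, ‖P2 x‖ ≤ ‖(1 : 𝔸)‖ * ∏ l, (‖(1 : 𝔸)‖ + ‖i2 l u‖) := by
    intro x
    refine norm_oprod_le _ _ fun l => ?_
    rw [← neg_smul]
    exact norm_exp_smul_le (i2 l u) (hi2 l u) _
  have hKbdd : ∀ x, ‖K x‖ ≤ M := by
    intro x
    calc ‖K x‖ ≤ ‖P1 x‖ * ‖P2 x‖ := norm_mul_le _ _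
      _ ≤ M := by
          rw [hM]
          exact mul_le_mul (hP1bdd x) (hP2bdd x) (norm_nonneg _)
            ((norm_nonneg _).trans (hP1bdd x))
  -- continuity of the kernel
  have hρcont1 : ∀ l, Continuous fun x : Fin m → ℝ => ρ1 l x u := fun l =>
    LinearMap.continuous_of_finiteDimensional (IsLinearMap.mk' _ (hlin1 l u))
  have hρcont2 : ∀ l, Continuous fun x : Fin m → ℝ => ρ2 l x u := fun l =>
    LinearMap.continuous_of_finiteDimensional (IsLinearMap.mk' _ (hlin2 l u))
  have hP1cont : Continuous P1 := by
    refine oprod_continuous _ fun l => ?_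
    exact NormedSpace.exp_continuous.comp (((hρcont1 l).smul continuous_const).neg)
  have hP2cont : Continuous P2 := by
    refine oprod_continuous _ fun l => ?_
    exact NormedSpace.exp_continuous.comp (((hρcont2 l).smul continuous_const).neg)
  have hKcont : Continuous K := hP1cont.mul hP2cont
  -- integrability of K • C and K • B
  have hKint : ∀ (A : (Fin m → ℝ) → 𝔸), Integrable A →
      Integrable (fun x => K x * A x) := by
    intro A hA
    refine Integrable.mono' (hA.norm.const_mul M)
      (hKcont.aestronglyMeasurable.mul hA.aestronglyMeasurable) ?_
    filter_upwards with x
    calc ‖K x * A x‖ ≤ ‖K x‖ * ‖A x‖ := norm_mul_le _ _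
      _ ≤ M * ‖A x‖ := mul_le_mul_of_nonneg_right (hKbdd x) (norm_nonneg _)
  have hKC : Integrable (fun x => K x * C x) := hKint C hC
  have hKB : Integrable (fun x => K x * B x) := hKint B hB
  -- rewrite gft as a single kernel multiplication
  have hgft : ∀ (A : (Fin m → ℝ) → 𝔸),
      gft ρ1 i1 ρ2 i2 A u = ∫ x, K x * A x := by
    intro A
    unfold gft
    refine integral_congr_ae (Filter.Eventually.of_forall fun x => ?_)
    show P1 x * A x * P2 x = K x * A x
    rw [mul_assoc, (hP2c x (A x)).eq, ← mul_assoc]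
  -- the bilinear multiplication map
  set L : 𝔸 →L[ℝ] 𝔸 →L[ℝ] 𝔸 := ContinuousLinearMap.mul ℝ 𝔸 with hL
  -- main computation
  rw [hgft, hgft, hgft]
  have key : (∫ x, K x * (∫ y, C y * B (x - y))) =
      ∫ x, ((fun y => K y * C y) ⋆[L, volume] (fun y => K y * B y)) x := by
    refine integral_congr_ae ?_
    have h1 : ∀ᵐ x : Fin m → ℝ,
        Integrable (fun y => C y * B (x - y)) := by
      have := (hC.convolution_integrand L hB).prod_right_ae
      filter_upwards [this] with x hx
      simpa [hL] using hx
    have h2 : ∀ᵐ x : Fin m → ℝ,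
        Integrable (fun y => (K y * C y) * (K (x - y) * B (x - y))) := by
      have := (hKC.convolution_integrand L hKB).prod_right_ae
      filter_upwards [this] with x hx
      simpa [hL] using hx
    filter_upwards [h1, h2] with x hx1 hx2
    have hpt : ∀ y : Fin m → ℝ,
        (K y * C y) * (K (x - y) * B (x - y)) = K x * (C y * B (x - y)) := by
      intro y
      have hxy : K x = K y * K (x - y) := by
        rw [← hKadd y (x - y)]
        congr 1
        abel
      rw [hxy]
      calc K y * C y * (K (x - y) * B (x - y))
          = K y * (C y * K (x - y)) * B (x - y) := by simp only [mul_assoc]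
        _ = K y * (K (x - y) * C y) * B (x - y) := by rw [(hKc (x - y) (C y)).eq]
        _ = K y * K (x - y) * (C y * B (x - y)) := by simp only [mul_assoc]
    have hconv : ((fun y => K y * C y) ⋆[L, volume] (fun y => K y * B y)) x =
        ∫ y, (K y * C y) * (K (x - y) * B (x - y)) := by
      simp [convolution, hL]
    rw [hconv]
    simp_rw [hpt]
    exact ((ContinuousLinearMap.mul ℝ 𝔸 (K x)).integral_comp_comm hx1).symm
  rw [key, integral_convolution L hKC hKB]
  simp [hL]
end
end
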